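/- Pointwise decomposition inequality for the singular range (used in the proof of Lemma 3.1). Let 1 < p < 2 and n ∈ {1,2,…}. There exists a constant C = C(p) > 0 such that for all vectors X, Y ∈ ℝⁿ with X ≠ Y: |X − Y|^p ≤ C (|X| + |Y|)^{p−2} |X − Y|² + C (|X| + |Y|)^{p(p−2)/2} |X − Y|^p |X|^{p(2−p)/2}. -/

import Mathlib

noncomputable section

/-- Euclidean space `ℝⁿ`. -/
abbrev Euc (n : ℕ) := EuclideanSpace ℝ (Fin n)

/-- Pointwise decomposition inequality for the singular range `1 < p < 2`,
used in the proof of Lemma 3.1. The constant `C` depends only on `p`. -/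
theorem pointwise_decomposition (p : ℝ) (hp1 : 1 < p) (hp2 : p < 2) :
    ∃ C > (0 : ℝ), ∀ n : ℕ, 1 ≤ n → ∀ X Y : Euc n, X ≠ Y →
      ‖X - Y‖ ^ p ≤
        C * (‖X‖ + ‖Y‖) ^ (p - 2) * ‖X - Y‖ ^ 2
          + C * (‖X‖ + ‖Y‖) ^ (p * (p - 2) / 2) * ‖X - Y‖ ^ p * ‖X‖ ^ (p * (2 - p) / 2) := by
  refine ⟨2, by norm_num, fun n hn X Y hXY => ?_⟩
  set d := ‖X - Y‖ with hdd
  set s := ‖X‖ + ‖Y‖ with hss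
  have hd0 : 0 < d := norm_sub_pos_iff.mpr hXY
  have hds : d ≤ s := norm_sub_le X Y
  have hs0 : 0 < s := lt_of_lt_of_le hd0 hds
  have hX0 : (0:ℝ) ≤ ‖X‖ := norm_nonneg X
  have hXs : ‖X‖ ≤ s := by rw [hss]; linarith [norm_nonneg Y]
  have hYX : ‖Y‖ ≤ ‖X‖ + d := by
    have h := norm_sub_norm_le Y X
    have h2 : ‖Y - X‖ = d := by rw [hdd, norm_sub_rev]
    linarith
  have hsd : s ≤ 2 * d + 2 * ‖X‖ := by rw [hss]; linarith
  set a := p * (2 - p) / 2 with haa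
  have hpa : p * (p - 2) / 2 = -a := by rw [haa]; ring
  have ha0 : 0 < a := by rw [haa]; nlinarith
  have ha1 : a ≤ 1 := by rw [haa]; nlinarith
  have hdp : 0 < d ^ p := Real.rpow_pos_of_pos hd0 p
  have h1 : d ^ p * d ≤ s ^ (p - 2) * d ^ (2:ℕ) * s := by
    have e1 : d ^ p * d = d ^ (p - 1) * d ^ (2:ℕ) := by
      rw [sq, ← mul_assoc, ← Real.rpow_add_one hd0.ne' (p - 1)]
      norm_num
    have e2 : s ^ (p - 2) * d ^ (2:ℕ) * s = s ^ (p - 1) * d ^ (2:ℕ) := by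
      have es : s ^ (p - 2) * s = s ^ (p - 1) := by
        rw [← Real.rpow_add_one hs0.ne' (p - 2)]; ring_nf
      rw [← es]; ring
    rw [e1, e2]
    have : d ^ (p - 1) ≤ s ^ (p - 1) := Real.rpow_le_rpow hd0.le hds (by linarith)
    have hd2 : (0:ℝ) ≤ d ^ (2:ℕ) := by positivity
    nlinarith
  have h2 : d ^ p * ‖X‖ ≤ s ^ (-a) * d ^ p * ‖X‖ ^ a * s := by
    rcases eq_or_lt_of_le hX0 with hX | hX
    · rw [← hX]
      have : (0:ℝ) ^ a = 0 := by
        rw [Real.zero_rpow (ne_of_gt ha0)]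
      rw [this]
      simp
    · have key : ‖X‖ ≤ ‖X‖ ^ a * s ^ (1 - a) := by
        calc ‖X‖ = ‖X‖ ^ a * ‖X‖ ^ (1 - a) := by
              rw [← Real.rpow_add hX]; norm_num
          _ ≤ ‖X‖ ^ a * s ^ (1 - a) := by
              have h3 : ‖X‖ ^ (1 - a) ≤ s ^ (1 - a) :=
                Real.rpow_le_rpow hX0 hXs (by linarith)
              have h4 : (0:ℝ) ≤ ‖X‖ ^ a := by positivity
              nlinarith
      calc d ^ p * ‖X‖ ≤ d ^ p * (‖X‖ ^ a * s ^ (1 - a)) := by nlinarith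
        _ = s ^ (-a) * d ^ p * ‖X‖ ^ a * s := by
            rw [show (1:ℝ) - a = -a + 1 by ring, Real.rpow_add hs0, Real.rpow_one]
            ring
  rw [hpa, ← mul_le_mul_iff_left₀ hs0]
  calc d ^ p * s ≤ d ^ p * (2 * d + 2 * ‖X‖) := by nlinarith
    _ = 2 * (d ^ p * d) + 2 * (d ^ p * ‖X‖) := by ring
    _ ≤ 2 * (s ^ (p - 2) * d ^ (2:ℕ) * s) + 2 * (s ^ (-a) * d ^ p * ‖X‖ ^ a * s) := by
        linarith
    _ = (2 * s ^ (p - 2) * d ^ 2 + 2 * s ^ (-a) * d ^ p * ‖X‖ ^ a) * s := by ring
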